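/- The space of brackets is closed under multiplication respecting both filtrations: for any integers s1,…,sl1 ≥ 1 and t1,…,tl2 ≥ 1, the product [s1,…,sl1]·[t1,…,tl2] in ℚ⟦q⟧ lies in the ℚ-linear span of 1 and all brackets [a1,…,ar] with r ≤ l1+l2 and a1+⋯+ar ≤ (s1+⋯+sl1)+(t1+⋯+tl2). In particular the ℚ-vector space spanned by 1 and all brackets is a ℚ-subalgebra of ℚ⟦q⟧. -/

import Mathlib

open Finset

/-! ### Auxiliary machinery -/

section Aux

noncomputable section

/-- `eF g u = ∑_{v ≥ 1} g (v-1) q^{u v}`. -/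
def eF (g : ℕ → ℚ) (u : ℕ) : PowerSeries ℚ :=
  PowerSeries.mk fun n => if 0 < u ∧ 0 < n ∧ u ∣ n then g (n / u - 1) else 0

/-- Truncated nested sum `∑_{N ≥ u₁ > u₂ > ⋯ > u_l ≥ 1} ∏ eF gᵢ uᵢ`. -/
def TT : List (ℕ → ℚ) → ℕ → PowerSeries ℚ
  | [], _ => 1
  | g :: gs, N => ∑ u ∈ Icc 1 N, eF g u * TT gs (u - 1)

/-- binomial coefficient functions -/
def binW (c : ℕ) : ℕ → ℚ := fun w => (w.choose (c - 1) : ℚ)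

/-- monomial coefficient functions of brackets -/
def monoW (s : ℕ) : ℕ → ℚ := fun w => ((w : ℚ) + 1) ^ (s - 1) / (Nat.factorial (s - 1))

lemma TT_nil (N : ℕ) : TT [] N = 1 := rfl

lemma TT_cons (g : ℕ → ℚ) (gs : List (ℕ → ℚ)) (N : ℕ) :
    TT (g :: gs) N = ∑ u ∈ Icc 1 N, eF g u * TT gs (u - 1) := rfl

@[simp] lemma TT_cons_zero (g : ℕ → ℚ) (gs : List (ℕ → ℚ)) : TT (g :: gs) 0 = 0 := by
  rw [TT_cons]; simp

lemma TT_cons_succ (g : ℕ → ℚ) (gs : List (ℕ → ℚ)) (N : ℕ) :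
    TT (g :: gs) (N + 1) = TT (g :: gs) N + eF g (N + 1) * TT gs N := by
  rw [TT_cons, TT_cons, ← Finset.Ico_add_one_right_eq_Icc, ← Finset.Ico_add_one_right_eq_Icc,
    Finset.sum_Ico_succ_top (by omega)]
  simp

lemma coeff_eF (g : ℕ → ℚ) (u n : ℕ) :
    PowerSeries.coeff n (eF g u) = if 0 < u ∧ 0 < n ∧ u ∣ n then g (n / u - 1) else 0 := by
  rw [eF, PowerSeries.coeff_mk]

lemma coeff_eF_eq_zero {g : ℕ → ℚ} {u n : ℕ} (h : n < u) :
    PowerSeries.coeff n (eF g u) = 0 := by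
  rw [eF, PowerSeries.coeff_mk, if_neg]
  rintro ⟨hu, hn, hd⟩
  exact absurd (Nat.le_of_dvd hn hd) (by omega)

lemma coeff_eF_mul_eq_zero {g : ℕ → ℚ} {u n : ℕ} (h : n < u) (X : PowerSeries ℚ) :
    PowerSeries.coeff n (eF g u * X) = 0 := by
  rw [PowerSeries.coeff_mul]
  apply Finset.sum_eq_zero
  rintro ⟨i, j⟩ hij
  rw [Finset.HasAntidiagonal.mem_antidiagonal] at hij
  rw [coeff_eF_eq_zero (by omega), zero_mul]

lemma coeff_TT_stable (gs : List (ℕ → ℚ)) {n N M : ℕ} (hN : n ≤ N) (hM : n ≤ M) :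
    PowerSeries.coeff n (TT gs N) = PowerSeries.coeff n (TT gs M) := by
  suffices H : ∀ K, n ≤ K → PowerSeries.coeff n (TT gs K) = PowerSeries.coeff n (TT gs n) by
    rw [H N hN, H M hM]
  intro K hK
  induction K, hK using Nat.le_induction with
  | base => rfl
  | succ K hK ih =>
    cases gs with
    | nil => rfl
    | cons g gs =>
      rw [TT_cons_succ, map_add, coeff_eF_mul_eq_zero (by omega), add_zero, ih]

/-- the full (non-truncated) nested sum, as a power series -/
def limB (gs : List (ℕ → ℚ)) : PowerSeries ℚ :=
  PowerSeries.mk fun n => PowerSeries.coeff n (TT gs n)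

lemma coeff_limB (gs : List (ℕ → ℚ)) {n N : ℕ} (h : n ≤ N) :
    PowerSeries.coeff n (limB gs) = PowerSeries.coeff n (TT gs N) := by
  rw [limB, PowerSeries.coeff_mk]
  exact coeff_TT_stable gs le_rfl h

/-! #### linearity of `TT` and `limB` in each slot -/

lemma eF_add (g h : ℕ → ℚ) (u : ℕ) : eF (g + h) u = eF g u + eF h u := by
  ext n
  simp only [eF, PowerSeries.coeff_mk, map_add, Pi.add_apply]
  split <;> simp

lemma eF_smul (c : ℚ) (g : ℕ → ℚ) (u : ℕ) : eF (c • g) u = c • eF g u := by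
  ext n
  simp only [eF, PowerSeries.coeff_mk, PowerSeries.coeff_smul, Pi.smul_apply, smul_eq_mul]
  split <;> simp

lemma TT_pos_add (pre : List (ℕ → ℚ)) (g h : ℕ → ℚ) (tl : List (ℕ → ℚ)) (N : ℕ) :
    TT (pre ++ (g + h) :: tl) N = TT (pre ++ g :: tl) N + TT (pre ++ h :: tl) N := by
  induction pre generalizing N with
  | nil =>
    simp only [List.nil_append, TT_cons, eF_add, ← Finset.sum_add_distrib]
    exact Finset.sum_congr rfl fun u _ => by ring
  | cons p pre ih =>
    simp only [List.cons_append, TT_cons, ← Finset.sum_add_distrib]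
    exact Finset.sum_congr rfl fun u _ => by rw [ih]; ring

lemma TT_pos_smul (pre : List (ℕ → ℚ)) (c : ℚ) (g : ℕ → ℚ) (tl : List (ℕ → ℚ)) (N : ℕ) :
    TT (pre ++ (c • g) :: tl) N = c • TT (pre ++ g :: tl) N := by
  induction pre generalizing N with
  | nil =>
    simp only [List.nil_append, TT_cons, eF_smul, Finset.smul_sum]
    exact Finset.sum_congr rfl fun u _ => by rw [smul_mul_assoc]
  | cons p pre ih =>
    simp only [List.cons_append, TT_cons, Finset.smul_sum]
    exact Finset.sum_congr rfl fun u _ => by rw [ih, mul_smul_comm]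

lemma TT_pos_zero (pre : List (ℕ → ℚ)) (tl : List (ℕ → ℚ)) (N : ℕ) :
    TT (pre ++ (0 : ℕ → ℚ) :: tl) N = 0 := by
  have := TT_pos_smul pre 0 0 tl N
  simpa using this

lemma limB_pos_add (pre : List (ℕ → ℚ)) (g h : ℕ → ℚ) (tl : List (ℕ → ℚ)) :
    limB (pre ++ (g + h) :: tl) = limB (pre ++ g :: tl) + limB (pre ++ h :: tl) := by
  ext n; simp only [limB, PowerSeries.coeff_mk, map_add, TT_pos_add]

lemma limB_pos_smul (pre : List (ℕ → ℚ)) (c : ℚ) (g : ℕ → ℚ) (tl : List (ℕ → ℚ)) :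
    limB (pre ++ (c • g) :: tl) = c • limB (pre ++ g :: tl) := by
  ext n; simp only [limB, PowerSeries.coeff_mk, PowerSeries.coeff_smul, TT_pos_smul]

lemma limB_pos_zero (pre : List (ℕ → ℚ)) (tl : List (ℕ → ℚ)) :
    limB (pre ++ (0 : ℕ → ℚ) :: tl) = 0 := by
  ext n; simp only [limB, PowerSeries.coeff_mk, TT_pos_zero, map_zero]

/-- expansion of `limB` along spans in each slot -/
lemma limB_span (hs : List (Set (ℕ → ℚ))) :
    ∀ (pre gs : List (ℕ → ℚ)), List.Forall₂ (fun g S => g ∈ Submodule.span ℚ S) gs hs →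
    limB (pre ++ gs) ∈ Submodule.span ℚ
      {p : PowerSeries ℚ | ∃ gs', List.Forall₂ (· ∈ ·) gs' hs ∧ p = limB (pre ++ gs')} := by
  induction hs with
  | nil =>
    intro pre gs hF
    cases hF
    exact Submodule.subset_span ⟨[], List.Forall₂.nil, rfl⟩
  | cons h0 hs ih =>
    intro pre gs hF
    obtain ⟨g0, gtl, hg0, htl, rfl⟩ :
        ∃ g0 gtl, g0 ∈ Submodule.span ℚ h0 ∧
          List.Forall₂ (fun g S => g ∈ Submodule.span ℚ S) gtl hs ∧ gs = g0 :: gtl := by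
      cases hF with
      | cons h1 h2 => exact ⟨_, _, h1, h2, rfl⟩
    clear hF
    induction hg0 using Submodule.span_induction with
    | mem x hx =>
      have h1 := ih (pre ++ [x]) gtl htl
      rw [show pre ++ x :: gtl = (pre ++ [x]) ++ gtl by simp]
      refine Submodule.span_le.2 ?_ h1
      rintro p ⟨gtl', hF', rfl⟩
      exact Submodule.subset_span ⟨x :: gtl', List.Forall₂.cons hx hF',
        by rw [List.append_assoc]; rfl⟩
    | zero => rw [limB_pos_zero]; exact Submodule.zero_mem _
    | add x y _ _ hx hy => rw [limB_pos_add]; exact Submodule.add_mem _ hx hy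
    | smul c x _ hx => rw [limB_pos_smul]; exact Submodule.smul_mem _ c hx

/-! #### the key multiplication property of binomial coefficient functions -/

lemma hv' (a b n : ℕ) :
    ∑ ij ∈ antidiagonal n, (a + ij.1).choose a * (b + ij.2).choose b
      = (a + b + 1 + n).choose (a + b + 1) := by
  have h1 := PowerSeries.mk_one_pow_eq_mk_choose_add (d := a) (S := ℚ)
  have h2 := PowerSeries.mk_one_pow_eq_mk_choose_add (d := b) (S := ℚ)
  have h3 := PowerSeries.mk_one_pow_eq_mk_choose_add (d := a + b + 1) (S := ℚ)
  have key : (PowerSeries.mk fun n => ((a + n).choose a : ℚ))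
        * (PowerSeries.mk fun n => ((b + n).choose b : ℚ))
      = PowerSeries.mk fun n => ((a + b + 1 + n).choose (a + b + 1) : ℚ) := by
    rw [← h1, ← h2, ← h3, ← pow_add]
    ring_nf
  have h := congrArg (PowerSeries.coeff n) key
  rw [PowerSeries.coeff_mul] at h
  simp only [PowerSeries.coeff_mk] at h
  exact_mod_cast h

lemma hv (p q W : ℕ) :
    ∑ i ∈ range (W + 1), (i.choose p) * ((W - i).choose q) = (W + 1).choose (p + q + 1) := by
  rcases lt_or_ge W (p + q) with h | h
  · rw [Nat.choose_eq_zero_of_lt (by omega)]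
    apply Finset.sum_eq_zero
    intro i hi
    simp only [mem_range] at hi
    rcases lt_or_ge i p with hip | hip
    · rw [Nat.choose_eq_zero_of_lt hip, zero_mul]
    · rw [Nat.choose_eq_zero_of_lt (show W - i < q by omega), mul_zero]
  · have key := hv' p q (W - p - q)
    rw [Nat.sum_antidiagonal_eq_sum_range_succ_mk] at key
    have e1 : ∑ i ∈ range (W + 1), (i.choose p) * ((W - i).choose q)
        = ∑ i ∈ Ico p (W + 1), (i.choose p) * ((W - i).choose q) := by
      rw [range_eq_Ico]
      symm
      apply Finset.sum_subset (Finset.Ico_subset_Ico (by omega) le_rfl)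
      intro i _ hi2
      have : i < p := by simp only [mem_Ico] at *; omega
      rw [Nat.choose_eq_zero_of_lt this, zero_mul]
    have e2 : ∑ i ∈ Ico p (W + 1), (i.choose p) * ((W - i).choose q)
        = ∑ k ∈ range (W + 1 - p), ((p + k).choose p) * ((W - (p + k)).choose q) := by
      rw [Finset.sum_Ico_eq_sum_range]
    have e3 : ∑ k ∈ range (W + 1 - p), ((p + k).choose p) * ((W - (p + k)).choose q)
        = ∑ k ∈ range (W - p - q + 1), ((p + k).choose p) * ((W - (p + k)).choose q) := by
      symm
      apply Finset.sum_subset (by apply Finset.range_subset_range.2; omega)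
      intro k hk hk2
      simp only [mem_range] at hk hk2
      rw [Nat.choose_eq_zero_of_lt (show W - (p + k) < q by omega), mul_zero]
    rw [e1, e2, e3, show W - p - q + 1 = (W - p - q).succ from rfl]
    rw [show (W + 1).choose (p + q + 1) = (p + q + 1 + (W - p - q)).choose (p + q + 1) by
      congr 1; omega]
    rw [← key]
    apply Finset.sum_congr rfl
    intro k hk
    simp only [mem_range, Nat.succ_eq_add_one] at hk
    congr 2
    omega

lemma eF_binW_mul {a b : ℕ} (ha : 1 ≤ a) (hb : 1 ≤ b) (u : ℕ) (hu : 0 < u) :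
    eF (binW a) u * eF (binW b) u = eF (binW (a + b)) u := by
  ext n
  rw [PowerSeries.coeff_mul, Nat.sum_antidiagonal_eq_sum_range_succ_mk, coeff_eF]
  simp only [coeff_eF]
  by_cases hdvd : 0 < n ∧ u ∣ n
  case neg =>
    rw [if_neg (by tauto)]
    apply Finset.sum_eq_zero
    intro i hi
    simp only [mem_range] at hi
    by_cases h1 : 0 < i ∧ u ∣ i
    · have h2 : ¬(0 < u ∧ 0 < n - i ∧ u ∣ n - i) := by
        rintro ⟨-, h2, h3⟩
        refine hdvd ⟨by omega, ?_⟩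
        have : n = i + (n - i) := by omega
        rw [this]; exact Nat.dvd_add h1.2 h3
      rw [if_neg h2, mul_zero]
    · rw [if_neg (by tauto), zero_mul]
  case pos =>
    obtain ⟨hn, m, rfl⟩ : 0 < n ∧ ∃ m, n = u * m := ⟨hdvd.1, hdvd.2⟩
    have hm : 0 < m := by
      rcases Nat.eq_zero_or_pos m with h | h
      · subst h; simp at hn
      · exact h
    rw [if_pos ⟨hu, hn, Dvd.intro m rfl⟩, Nat.mul_div_cancel_left m hu]
    set H : ℕ → ℚ := fun x =>
      (if 0 < u ∧ 0 < x ∧ u ∣ x then binW a (x / u - 1) else 0) *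
        (if 0 < u ∧ 0 < u * m - x ∧ u ∣ u * m - x then binW b ((u * m - x) / u - 1) else 0)
      with hH
    have sub1 : (range (m+1)).image (fun v => u * v) ⊆ range (u * m).succ := by
      intro x hx
      simp only [mem_image, mem_range] at hx
      obtain ⟨v, hv1, rfl⟩ := hx
      simp only [mem_range, Nat.succ_eq_add_one]
      have := Nat.mul_le_mul_left u (show v ≤ m by omega)
      omega
    have himg : ∑ x ∈ (range (m+1)).image (fun v => u * v), H x
        = ∑ v ∈ range (m + 1), H (u * v) :=
      Finset.sum_image (fun x _ y _ h => Nat.eq_of_mul_eq_mul_left hu h)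
    have step1 : ∑ x ∈ range (u * m).succ, H x = ∑ v ∈ range (m + 1), H (u * v) := by
      rw [← himg]
      symm
      apply Finset.sum_subset sub1
      intro x hx hx2
      simp only [mem_range] at hx
      simp only [mem_image, mem_range] at hx2
      by_cases h1 : 0 < x ∧ u ∣ x
      · exfalso
        obtain ⟨v, rfl⟩ := h1.2
        refine hx2 ⟨v, ?_, rfl⟩
        have h3 : u * v ≤ u * m := by omega
        have := Nat.le_of_mul_le_mul_left h3 hu
        omega
      · rw [hH]
        simp only
        rw [if_neg (by tauto), zero_mul]
    have step2 : ∀ v ∈ range (m + 1), H (u * v) =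
        (if 0 < v then binW a (v - 1) else 0) * (if v < m then binW b (m - v - 1) else 0) := by
      intro v hv
      simp only [mem_range] at hv
      rw [hH]
      simp only
      have e1 : u * v / u = v := Nat.mul_div_cancel_left v hu
      have e2 : u * m - u * v = u * (m - v) := by rw [Nat.mul_sub]
      have e3 : u * (m - v) / u = m - v := Nat.mul_div_cancel_left _ hu
      rw [e2, e3, e1]
      by_cases h : 0 < v
      case neg =>
        have hv0 : v = 0 := by omega
        subst hv0
        simp
      case pos =>
      congr 1
      · rw [if_pos ⟨hu, by positivity, Dvd.intro v rfl⟩, if_pos h]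
      · by_cases h2 : v < m
        · rw [if_pos ⟨hu, by
            have : 0 < m - v := by omega
            positivity, Dvd.intro (m - v) rfl⟩, if_pos h2]
        · rw [if_neg (by
            rintro ⟨-, hc2, -⟩
            have hmv : m - v = 0 := by omega
            rw [hmv, mul_zero] at hc2
            omega), if_neg h2]
    rw [step1, Finset.sum_congr rfl step2]
    have step3 : ∑ v ∈ range (m + 1),
        (if 0 < v then binW a (v - 1) else 0) * (if v < m then binW b (m - v - 1) else 0)
        = ∑ v ∈ Ico 1 m,
        (if 0 < v then binW a (v - 1) else 0) * (if v < m then binW b (m - v - 1) else 0) := by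
      symm
      apply Finset.sum_subset (show Ico 1 m ⊆ range (m+1) by
        intro x hx; simp only [mem_Ico] at hx; simp only [mem_range]; omega)
      intro v hv hv2
      simp only [mem_range] at hv
      simp only [mem_Ico] at hv2
      rcases Nat.lt_or_ge v 1 with h | h
      · rw [if_neg (by omega), zero_mul]
      · rw [show (if v < m then binW b (m - v - 1) else 0) = 0 from if_neg (by omega), mul_zero]
    have step4 : ∑ v ∈ Ico 1 m,
        (if 0 < v then binW a (v - 1) else 0) * (if v < m then binW b (m - v - 1) else 0)
        = ∑ v ∈ Ico 1 m, binW a (v - 1) * binW b (m - v - 1) :=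
      Finset.sum_congr rfl (fun v hv => by
        simp only [mem_Ico] at hv
        rw [if_pos (by omega), if_pos (by omega)])
    rw [step3, step4, Finset.sum_Ico_eq_sum_range]
    rcases Nat.lt_or_ge m 2 with h2 | h2
    · have : m = 1 := by omega
      subst this
      simp only [show (1:ℕ) - 1 = 0 from rfl, range_zero, sum_empty, binW]
      rw [Nat.choose_eq_zero_of_lt (by omega)]
      simp
    · have key := hv (a - 1) (b - 1) (m - 2)
      have hm1 : m - 1 = (m - 2) + 1 := by omega
      rw [hm1]
      have cast_key : (((m - 2 + 1).choose ((a-1) + (b-1) + 1) : ℕ) : ℚ)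
          = ∑ w ∈ range (m - 2 + 1), ((w.choose (a-1) : ℚ)) * (((m - 2 - w).choose (b-1) : ℚ)) := by
        rw [← key]
        push_cast
        rfl
      have e4 : (a - 1) + (b - 1) + 1 = a + b - 1 := by omega
      rw [e4] at cast_key
      rw [show binW (a+b) (m - 2 + 1) = (((m-2+1).choose (a+b-1) : ℕ) : ℚ) by
        simp [binW]]
      rw [cast_key]
      apply Finset.sum_congr rfl
      intro w hw
      simp only [mem_range] at hw
      simp only [binW]
      rw [show 1 + w - 1 = w by omega, show m - (1 + w) - 1 = m - 2 - w by omega]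

end

end Aux
section Aux2
noncomputable section

theorem TT_mul_expand : ∀ (n : ℕ) (s t : List ℕ), s.length + t.length ≤ n →
    (∀ x ∈ s, 1 ≤ x) → (∀ x ∈ t, 1 ≤ x) →
    ∃ (F : Finset (List ℕ)) (c : List ℕ → ℚ),
      (∀ w ∈ F, (∀ x ∈ w, 1 ≤ x) ∧ w.length ≤ s.length + t.length ∧ w.sum = s.sum + t.sum) ∧
      ∀ N, TT (s.map binW) N * TT (t.map binW) N
        = ∑ w ∈ F, c w • TT (w.map binW) N := by
  intro n
  induction n with
  | zero =>
    intro s t hlen _ _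
    have hs : s = [] := by cases s <;> simp_all
    have ht : t = [] := by cases t <;> simp_all
    subst hs; subst ht
    exact ⟨{[]}, fun _ => 1, by simp, fun N => by simp [TT_nil]⟩
  | succ n ih =>
    intro s t hlen hs ht
    match s, t with
    | [], t =>
      refine ⟨{t}, fun _ => 1, ?_, fun N => by simp [TT_nil]⟩
      intro w hw
      simp only [mem_singleton] at hw
      subst hw
      exact ⟨ht, by simp, by simp⟩
    | s, [] =>
      refine ⟨{s}, fun _ => 1, ?_, fun N => by simp [TT_nil]⟩
      intro w hw
      simp only [mem_singleton] at hw
      subst hw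
      exact ⟨hs, by simp, by simp⟩
    | a :: s', b :: t' =>
      have ha : 1 ≤ a := hs a (by simp)
      have hb : 1 ≤ b := ht b (by simp)
      have hs' : ∀ x ∈ s', 1 ≤ x := fun x hx => hs x (by simp [hx])
      have ht' : ∀ x ∈ t', 1 ≤ x := fun x hx => ht x (by simp [hx])
      simp only [List.length_cons] at hlen
      obtain ⟨F1, c1, hF1, e1⟩ := ih s' (b :: t')
        (by simp only [List.length_cons]; omega) hs' ht
      obtain ⟨F2, c2, hF2, e2⟩ := ih (a :: s') t'
        (by simp only [List.length_cons]; omega) hs ht'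
      obtain ⟨F3, c3, hF3, e3⟩ := ih s' t'
        (by omega) hs' ht'
      set f1 : List ℕ → ℚ := fun w => match w with
        | [] => 0
        | x :: ws => if x = a ∧ ws ∈ F1 then c1 ws else 0 with hf1
      set f2 : List ℕ → ℚ := fun w => match w with
        | [] => 0
        | x :: ws => if x = b ∧ ws ∈ F2 then c2 ws else 0 with hf2
      set f3 : List ℕ → ℚ := fun w => match w with
        | [] => 0
        | x :: ws => if x = a + b ∧ ws ∈ F3 then c3 ws else 0 with hf3
      set F : Finset (List ℕ) :=
        F1.image (a :: ·) ∪ F2.image (b :: ·) ∪ F3.image ((a + b) :: ·) with hF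
      have consInj : ∀ (x : ℕ), Function.Injective (x :: · : List ℕ → List ℕ) :=
        fun x w1 w2 h => by simpa using h
      have hsplit : ∀ (D : List ℕ → PowerSeries ℚ),
          ∑ w ∈ F, (f1 w + f2 w + f3 w) • D w
            = ∑ ws ∈ F1, c1 ws • D (a :: ws) + ∑ ws ∈ F2, c2 ws • D (b :: ws)
              + ∑ ws ∈ F3, c3 ws • D ((a + b) :: ws) := by
        intro D
        have gen : ∀ (x : ℕ) (F' : Finset (List ℕ)) (c' : List ℕ → ℚ)
            (f : List ℕ → ℚ), (F'.image (x :: ·)) ⊆ F →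
            (∀ w, f w = match w with
              | [] => 0
              | y :: ws => if y = x ∧ ws ∈ F' then c' ws else 0) →
            ∑ w ∈ F, f w • D w = ∑ ws ∈ F', c' ws • D (x :: ws) := by
          intro x F' c' f hsub hfdef
          rw [← Finset.sum_subset hsub]
          · rw [Finset.sum_image (fun w1 _ w2 _ h => consInj x h)]
            apply Finset.sum_congr rfl
            intro ws hws
            rw [hfdef]
            simp [hws]
          · intro w hw hw2
            rw [hfdef]
            match w with
            | [] => simp
            | y :: ws =>
              simp only
              rw [if_neg, zero_smul]
              rintro ⟨rfl, hws⟩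
              exact hw2 (Finset.mem_image.2 ⟨ws, hws, rfl⟩)
        simp only [add_smul, Finset.sum_add_distrib]
        rw [gen a F1 c1 f1 (by rw [hF]; intro w hw; simp only [mem_union]; tauto) (fun w => by rw [hf1]),
          gen b F2 c2 f2 (by rw [hF]; intro w hw; simp only [mem_union]; tauto) (fun w => by rw [hf2]),
          gen _ F3 c3 f3 (by rw [hF]; intro w hw; simp only [mem_union]; tauto) (fun w => by rw [hf3])]
      refine ⟨F, fun w => f1 w + f2 w + f3 w, ?_, ?_⟩
      · intro w hw
        rw [hF] at hw
        simp only [mem_union, mem_image] at hw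
        rcases hw with (⟨ws, hws, rfl⟩ | ⟨ws, hws, rfl⟩) | ⟨ws, hws, rfl⟩
        · obtain ⟨hx, hl, hsum⟩ := hF1 ws hws
          refine ⟨fun x hx2 => ?_, ?_, ?_⟩
          · rcases List.mem_cons.1 hx2 with rfl | h
            · exact ha
            · exact hx x h
          · simp only [List.length_cons] at hl ⊢; omega
          · simp only [List.sum_cons] at hsum ⊢; omega
        · obtain ⟨hx, hl, hsum⟩ := hF2 ws hws
          refine ⟨fun x hx2 => ?_, ?_, ?_⟩
          · rcases List.mem_cons.1 hx2 with rfl | h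
            · exact hb
            · exact hx x h
          · simp only [List.length_cons] at hl ⊢; omega
          · simp only [List.sum_cons] at hsum ⊢; omega
        · obtain ⟨hx, hl, hsum⟩ := hF3 ws hws
          refine ⟨fun x hx2 => ?_, ?_, ?_⟩
          · rcases List.mem_cons.1 hx2 with rfl | h
            · exact le_trans ha (by omega)
            · exact hx x h
          · simp only [List.length_cons] at hl ⊢; omega
          · simp only [List.sum_cons] at hsum ⊢; omega
      · intro N
        induction N with
        | zero =>
          simp only [List.map_cons, TT_cons_zero, zero_mul]
          symm
          apply Finset.sum_eq_zero
          intro w hw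
          rw [hF] at hw
          simp only [mem_union, mem_image] at hw
          rcases hw with (⟨ws, hws, rfl⟩ | ⟨ws, hws, rfl⟩) | ⟨ws, hws, rfl⟩ <;>
            simp [List.map_cons, TT_cons_zero]
        | succ N ihN =>
          have heAB : eF (binW a) (N+1) * eF (binW b) (N+1) = eF (binW (a+b)) (N+1) :=
            eF_binW_mul ha hb (N+1) (by omega)
          have hsplit1 := hsplit (fun w => TT (w.map binW) (N+1))
          have hsplitN := hsplit (fun w => TT (w.map binW) N)
          have h1 : ∑ ws ∈ F1, c1 ws • TT ((a :: ws).map binW) (N+1)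
              = ∑ ws ∈ F1, c1 ws • TT ((a :: ws).map binW) N
                + eF (binW a) (N+1) * ∑ ws ∈ F1, c1 ws • TT (ws.map binW) N := by
            rw [Finset.mul_sum, ← Finset.sum_add_distrib]
            apply Finset.sum_congr rfl
            intro ws hws
            rw [List.map_cons, TT_cons_succ, smul_add, mul_smul_comm]
          have h2 : ∑ ws ∈ F2, c2 ws • TT ((b :: ws).map binW) (N+1)
              = ∑ ws ∈ F2, c2 ws • TT ((b :: ws).map binW) N
                + eF (binW b) (N+1) * ∑ ws ∈ F2, c2 ws • TT (ws.map binW) N := by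
            rw [Finset.mul_sum, ← Finset.sum_add_distrib]
            apply Finset.sum_congr rfl
            intro ws hws
            rw [List.map_cons, TT_cons_succ, smul_add, mul_smul_comm]
          have h3 : ∑ ws ∈ F3, c3 ws • TT (((a + b) :: ws).map binW) (N+1)
              = ∑ ws ∈ F3, c3 ws • TT (((a + b) :: ws).map binW) N
                + eF (binW (a + b)) (N+1) * ∑ ws ∈ F3, c3 ws • TT (ws.map binW) N := by
            rw [Finset.mul_sum, ← Finset.sum_add_distrib]
            apply Finset.sum_congr rfl
            intro ws hws
            rw [List.map_cons, TT_cons_succ, smul_add, mul_smul_comm]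
          have e1N := e1 N
          have e2N := e2 N
          have e3N := e3 N
          simp only [List.map_cons] at e1N e2N e3N ihN hsplit1 hsplitN h1 h2 h3 ⊢
          rw [TT_cons_succ, TT_cons_succ, hsplit1, h1, h2, h3]
          linear_combination ihN + hsplitN + eF (binW a) (N+1) * e1N
            + eF (binW b) (N+1) * e2N + eF (binW (a+b)) (N+1) * e3N
            + (TT (List.map binW s') N * TT (List.map binW t') N) * heAB

def powF (j : ℕ) : ℕ → ℚ := fun w => (w : ℚ) ^ j
def chooseF (j : ℕ) : ℕ → ℚ := fun w => (w.choose j : ℚ)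
def prodF (k : ℕ) : ℕ → ℚ := fun w => ∏ i ∈ range k, ((w : ℚ) - i)

lemma prodF_eq_chooseF (k : ℕ) : prodF k = fun w => (k.factorial : ℚ) * w.choose k := by
  induction k with
  | zero => funext w; simp [prodF]
  | succ k ih =>
    funext w
    have : prodF (k+1) w = prodF k w * ((w:ℚ) - k) := by
      simp [prodF, Finset.prod_range_succ]
    rw [this, ih]
    simp only
    rcases Nat.lt_or_ge w k with h | h
    · rw [Nat.choose_eq_zero_of_lt h, Nat.choose_eq_zero_of_lt (by omega)]
      simp
    · have key : w.choose (k+1) * (k+1) = w.choose k * (w - k) := Nat.choose_succ_right_eq w k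
      have cast_key : (w.choose (k+1) : ℚ) * (k+1) = (w.choose k : ℚ) * ((w : ℚ) - k) := by
        have h2 : ((w - k : ℕ) : ℚ) = (w : ℚ) - k := by
          push_cast [h]; ring
        calc (w.choose (k+1) : ℚ) * (k+1) = ((w.choose (k+1) * (k+1) : ℕ) : ℚ) := by push_cast; ring
          _ = ((w.choose k * (w - k) : ℕ) : ℚ) := by rw [key]
          _ = (w.choose k : ℚ) * ((w:ℚ) - k) := by push_cast [h]; ring
      have hfac : ((k+1).factorial : ℚ) = (k.factorial : ℚ) * (k+1) := by
        rw [Nat.factorial_succ]; push_cast; ring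
      rw [hfac]
      calc (k.factorial : ℚ) * (w.choose k) * ((w:ℚ) - k)
          = (k.factorial : ℚ) * ((w.choose k : ℚ) * ((w:ℚ) - k)) := by ring
        _ = (k.factorial : ℚ) * ((w.choose (k+1) : ℚ) * (k+1)) := by rw [cast_key]
        _ = (k.factorial : ℚ) * (k+1) * (w.choose (k+1)) := by ring

/-- multiplication by a linear factor preserves polynomial spans -/
lemma mul_linear_mem {k : ℕ} {f : ℕ → ℚ} (c : ℚ)
    (hf : f ∈ Submodule.span ℚ {g | ∃ j < k, g = powF j}) :
    (fun w => f w * ((w : ℚ) - c)) ∈ Submodule.span ℚ {g | ∃ j < k + 1, g = powF j} := by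
  induction hf using Submodule.span_induction with
  | mem x hx =>
    obtain ⟨j, hj, rfl⟩ := hx
    have : (fun w => powF j w * ((w:ℚ) - c)) = powF (j+1) + (-c) • powF j := by
      funext w; simp [powF]; ring
    rw [this]
    exact Submodule.add_mem _ (Submodule.subset_span ⟨j+1, by omega, rfl⟩)
      (Submodule.smul_mem _ _ (Submodule.subset_span ⟨j, by omega, rfl⟩))
  | zero =>
    have : (fun w => (0 : ℕ → ℚ) w * ((w:ℚ) - c)) = 0 := by funext w; simp
    rw [this]; exact Submodule.zero_mem _
  | add x y _ _ hx hy =>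
    have : (fun w => (x + y) w * ((w:ℚ) - c))
        = (fun w => x w * ((w:ℚ) - c)) + (fun w => y w * ((w:ℚ) - c)) := by
      funext w; simp; ring
    rw [this]; exact Submodule.add_mem _ hx hy
  | smul r x _ hx =>
    have : (fun w => (r • x) w * ((w:ℚ) - c)) = r • (fun w => x w * ((w:ℚ) - c)) := by
      funext w; simp; ring
    rw [this]; exact Submodule.smul_mem _ _ hx

lemma pow_sub_prod_mem (k : ℕ) :
    powF k - prodF k ∈ Submodule.span ℚ {g | ∃ j < k, g = powF j} := by
  induction k with
  | zero =>
    have : powF 0 - prodF 0 = 0 := by funext w; simp [powF, prodF]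
    rw [this]; exact Submodule.zero_mem _
  | succ k ih =>
    have key : powF (k+1) - prodF (k+1)
        = (k : ℚ) • powF k + (fun w => (powF k - prodF k) w * ((w:ℚ) - k)) := by
      funext w
      simp only [Pi.sub_apply, Pi.add_apply, Pi.smul_apply, smul_eq_mul, powF, prodF,
        Finset.prod_range_succ]
      ring
    rw [key]
    refine Submodule.add_mem _
      (Submodule.smul_mem _ _ (Submodule.subset_span ⟨k, by omega, rfl⟩)) ?_
    exact mul_linear_mem (k : ℚ) ih

lemma chooseF_mem_pow_span (k : ℕ) :
    chooseF k ∈ Submodule.span ℚ {g | ∃ j ≤ k, g = powF j} := by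
  have h1 : chooseF k = ((k.factorial : ℚ)⁻¹) • prodF k := by
    rw [prodF_eq_chooseF]
    funext w
    simp only [chooseF, Pi.smul_apply, smul_eq_mul]
    rw [← mul_assoc, inv_mul_cancel₀ (by positivity), one_mul]
  rw [h1]
  apply Submodule.smul_mem
  have h2 : prodF k = powF k - (powF k - prodF k) := by ring
  rw [h2]
  refine Submodule.sub_mem _ (Submodule.subset_span ⟨k, le_rfl, rfl⟩) ?_
  refine Submodule.span_le.2 ?_ (pow_sub_prod_mem k)
  rintro g ⟨j, hj, rfl⟩
  exact Submodule.subset_span ⟨j, by omega, rfl⟩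

lemma powF_mem_choose_span (k : ℕ) :
    powF k ∈ Submodule.span ℚ {g | ∃ j ≤ k, g = chooseF j} := by
  induction k using Nat.strong_induction_on with
  | _ k ih =>
    have h1 : powF k = (k.factorial : ℚ) • chooseF k + (powF k - prodF k) := by
      rw [prodF_eq_chooseF]
      funext w
      simp only [Pi.add_apply, Pi.sub_apply, Pi.smul_apply, smul_eq_mul, chooseF]
      ring
    rw [h1]
    refine Submodule.add_mem _
      (Submodule.smul_mem _ _ (Submodule.subset_span ⟨k, le_rfl, rfl⟩)) ?_
    refine Submodule.span_le.2 ?_ (pow_sub_prod_mem k)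
    rintro g ⟨j, hj, rfl⟩
    refine Submodule.span_le.2 ?_ (ih j hj)
    rintro g ⟨i, hi, rfl⟩
    exact Submodule.subset_span ⟨i, by omega, rfl⟩

/-- binomial expansions for the shift -/
lemma shift_mem_pow_span (k : ℕ) :
    (fun w : ℕ => ((w : ℚ) + 1) ^ k) ∈ Submodule.span ℚ {g | ∃ j ≤ k, g = powF j} := by
  have : (fun w : ℕ => ((w : ℚ) + 1) ^ k)
      = ∑ j ∈ range (k+1), ((k.choose j : ℚ)) • powF j := by
    funext w
    rw [add_pow]
    simp only [Finset.sum_apply, Pi.smul_apply, powF, smul_eq_mul, one_pow]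
    exact Finset.sum_congr rfl fun j hj => by ring
  rw [this]
  apply Submodule.sum_mem
  intro j hj
  simp only [mem_range] at hj
  exact Submodule.smul_mem _ _ (Submodule.subset_span ⟨j, by omega, rfl⟩)

lemma pow_mem_shift_span (k : ℕ) :
    powF k ∈ Submodule.span ℚ {g | ∃ j ≤ k, g = fun w : ℕ => ((w : ℚ) + 1) ^ j} := by
  have : powF k = ∑ j ∈ range (k+1), ((k.choose j : ℚ) * (-1 : ℚ) ^ (k - j)) •
      (fun w : ℕ => ((w : ℚ) + 1) ^ j) := by
    funext w
    have : (w : ℚ) ^ k = (((w : ℚ) + 1) + (-1)) ^ k := by ring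
    rw [powF, this, add_pow]
    simp only [Finset.sum_apply, Pi.smul_apply, smul_eq_mul]
    exact Finset.sum_congr rfl fun j hj => by ring
  rw [this]
  apply Submodule.sum_mem
  intro j hj
  simp only [mem_range] at hj
  exact Submodule.smul_mem _ _ (Submodule.subset_span ⟨j, by omega, rfl⟩)

/-- Change of basis, direction 1: `monoW s` in span of `binW`s -/
lemma monoW_mem {s : ℕ} (hs : 1 ≤ s) :
    monoW s ∈ Submodule.span ℚ {g | ∃ c ∈ Icc 1 s, g = binW c} := by
  have h0 : monoW s = ((Nat.factorial (s-1) : ℚ)⁻¹) • (fun w : ℕ => ((w:ℚ)+1)^(s-1)) := by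
    funext w; simp [monoW, div_eq_inv_mul]
  rw [h0]
  apply Submodule.smul_mem
  refine Submodule.span_le.2 ?_ (shift_mem_pow_span (s-1))
  rintro g ⟨j, hj, rfl⟩
  refine Submodule.span_le.2 ?_ (powF_mem_choose_span j)
  rintro g ⟨i, hi, rfl⟩
  refine Submodule.subset_span ⟨i + 1, ?_, ?_⟩
  · simp only [mem_Icc]
    constructor
    · omega
    · omega
  · funext w; simp [binW, chooseF]

/-- Change of basis, direction 2: `binW c` in span of `monoW`s -/
lemma binW_mem {c : ℕ} (hc : 1 ≤ c) :
    binW c ∈ Submodule.span ℚ {g | ∃ j ∈ Icc 1 c, g = monoW j} := by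
  have h0 : binW c = chooseF (c - 1) := by funext w; simp [binW, chooseF]
  rw [h0]
  refine Submodule.span_le.2 ?_ (chooseF_mem_pow_span (c-1))
  rintro g ⟨j, hj, rfl⟩
  refine Submodule.span_le.2 ?_ (pow_mem_shift_span j)
  rintro g ⟨i, hi, rfl⟩
  have : (fun w : ℕ => ((w:ℚ)+1)^i) = (Nat.factorial i : ℚ) • monoW (i + 1) := by
    funext w
    simp only [monoW, Pi.smul_apply, smul_eq_mul, Nat.add_sub_cancel]
    field_simp
  rw [this]
  apply Submodule.smul_mem
  exact Submodule.subset_span ⟨i + 1, by simp only [mem_Icc]; omega, rfl⟩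

open Classical in
noncomputable def BCcond (l N n : ℕ) (u v : Fin l → ℕ) : Prop :=
  (∀ i j : Fin l, i < j → u j < u i) ∧ (∀ j, 0 < u j ∧ u j ≤ N) ∧ (∀ j, 0 < v j) ∧
    (∑ j, u j * v j) = n

open Classical in
noncomputable def BC {l : ℕ} (g : Fin l → ℕ → ℚ) (N n : ℕ) : ℚ :=
  ∑ u ∈ Fintype.piFinset (fun _ : Fin l => range (N + 1)),
    ∑ v ∈ Fintype.piFinset (fun _ : Fin l => range (n + 1)),
      if BCcond l N n u v then ∏ j, g j (v j - 1) else 0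

open Classical in
lemma sum_piFinset_succ {M : Type*} [AddCommMonoid M] {l : ℕ} (S : Finset ℕ)
    (F : (Fin (l + 1) → ℕ) → M) :
    ∑ f ∈ Fintype.piFinset (fun _ : Fin (l + 1) => S), F f
      = ∑ x ∈ S, ∑ f ∈ Fintype.piFinset (fun _ : Fin l => S), F (Fin.cons x f) := by
  rw [← Finset.sum_product']
  symm
  refine Finset.sum_nbij' (fun p => Fin.cons p.1 p.2) (fun f => (f 0, Fin.tail f)) ?_ ?_ ?_ ?_ ?_
  · rintro ⟨x, f⟩ hp
    simp only [mem_product, Fintype.mem_piFinset] at hp ⊢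
    intro j
    refine Fin.cases ?_ ?_ j
    · simpa using hp.1
    · intro i; simpa [Fin.cons_succ] using hp.2 i
  · intro f hf
    simp only [Fintype.mem_piFinset] at hf
    simp only [mem_product, Fintype.mem_piFinset]
    exact ⟨hf 0, fun i => hf i.succ⟩
  · rintro ⟨x, f⟩ _
    simp [Fin.tail_cons]
  · intro f _
    simp [Fin.cons_self_tail]
  · rintro ⟨x, f⟩ _
    rfl

lemma single_le_sum_nat {l : ℕ} (f : Fin l → ℕ) (j : Fin l) : f j ≤ ∑ i, f i :=
  Finset.single_le_sum (fun _ _ => Nat.zero_le _) (mem_univ j)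

open Classical in
lemma BC_resize {l : ℕ} (g : Fin l → ℕ → ℚ) {N n M K : ℕ} (hM : N ≤ M) (hK : n ≤ K) :
    ∑ u ∈ Fintype.piFinset (fun _ : Fin l => range (M + 1)),
      ∑ v ∈ Fintype.piFinset (fun _ : Fin l => range (K + 1)),
        (if BCcond l N n u v then ∏ j, g j (v j - 1) else 0) = BC g N n := by
  have inner : ∀ u : Fin l → ℕ,
      ∑ v ∈ Fintype.piFinset (fun _ : Fin l => range (K + 1)),
        (if BCcond l N n u v then ∏ j, g j (v j - 1) else 0)
      = ∑ v ∈ Fintype.piFinset (fun _ : Fin l => range (n + 1)),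
        (if BCcond l N n u v then ∏ j, g j (v j - 1) else 0) := by
    intro u
    symm
    apply Finset.sum_subset
    · intro v hv
      simp only [Fintype.mem_piFinset, mem_range] at hv ⊢
      intro j; have := hv j; omega
    · intro v hv hv2
      simp only [Fintype.mem_piFinset, mem_range] at hv hv2
      push_neg at hv2
      obtain ⟨j, hj⟩ := hv2
      rw [if_neg]
      rintro ⟨-, h2, h3, h4⟩
      have h5 : u j * v j ≤ ∑ i, u i * v i := single_le_sum_nat (fun i => u i * v i) j
      have h6 : v j ≤ u j * v j := Nat.le_mul_of_pos_left _ (h2 j).1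
      omega
  simp only [inner]
  symm
  apply Finset.sum_subset
  · intro u hu
    simp only [Fintype.mem_piFinset, mem_range] at hu ⊢
    intro j; have := hu j; omega
  · intro u hu hu2
    simp only [Fintype.mem_piFinset, mem_range] at hu hu2
    push_neg at hu2
    obtain ⟨j, hj⟩ := hu2
    apply Finset.sum_eq_zero
    intro v _
    rw [if_neg]
    rintro ⟨-, h2, -, -⟩
    have := (h2 j).2
    omega

lemma sum_multiples {u0 n : ℕ} (hu : 0 < u0) (H : ℕ → ℚ)
    (hH : ∀ i, H i ≠ 0 → (u0 ∣ i ∧ i ≤ n)) :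
    ∑ i ∈ range (n + 1), H i = ∑ v ∈ range (n + 1), H (u0 * v) := by
  have himg : ∑ x ∈ (range (n+1)).image (fun v => u0 * v), H x
      = ∑ v ∈ range (n + 1), H (u0 * v) :=
    Finset.sum_image (fun x _ y _ h => Nat.eq_of_mul_eq_mul_left hu h)
  rw [← himg]
  have e1 : ∑ i ∈ range (n + 1), H i = ∑ i ∈ range (u0 * n + 1), H i := by
    apply Finset.sum_subset
    · apply Finset.range_subset_range.2
      have := Nat.le_mul_of_pos_left n hu
      omega
    · intro i hi hi2
      simp only [mem_range] at hi hi2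
      by_contra h
      have := hH i h
      omega
  rw [e1]
  symm
  apply Finset.sum_subset
  · intro x hx
    simp only [mem_image, mem_range] at hx ⊢
    obtain ⟨v, hv, rfl⟩ := hx
    have := Nat.mul_le_mul_left u0 (show v ≤ n by omega)
    omega
  · intro i hi hi2
    simp only [mem_range] at hi
    simp only [mem_image, mem_range] at hi2
    by_contra h
    obtain ⟨hdvd, hle⟩ := hH i h
    obtain ⟨v, rfl⟩ := hdvd
    refine hi2 ⟨v, ?_, rfl⟩
    have : v ≤ u0 * v := Nat.le_mul_of_pos_left v hu
    omega

open Classical in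
lemma condCons {l N n : ℕ} (u0 v0 : ℕ) (ut vt : Fin l → ℕ) :
    BCcond (l+1) N n (Fin.cons u0 ut) (Fin.cons v0 vt)
      ↔ (1 ≤ u0 ∧ u0 ≤ N ∧ 1 ≤ v0 ∧ u0 * v0 ≤ n)
        ∧ BCcond l (u0 - 1) (n - u0 * v0) ut vt := by
  constructor
  · rintro ⟨hdec, hub, hvp, hsum⟩
    have hu0 : 0 < u0 ∧ u0 ≤ N := by simpa using hub 0
    have hv0 : 0 < v0 := by simpa using hvp 0
    rw [Fin.sum_univ_succ] at hsum
    simp only [Fin.cons_zero, Fin.cons_succ] at hsum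
    have huv : u0 * v0 ≤ n := by omega
    refine ⟨⟨hu0.1, hu0.2, hv0, huv⟩, ?_, ?_, ?_, ?_⟩
    · intro i j hij
      have := hdec i.succ j.succ (by simpa using hij)
      simpa using this
    · intro j
      have h1 := (hub j.succ).1
      have h2 := hdec 0 j.succ (Fin.succ_pos j)
      simp only [Fin.cons_zero, Fin.cons_succ] at h1 h2
      omega
    · intro j
      have := hvp j.succ
      simpa using this
    · omega
  · rintro ⟨⟨h1, h2, h3, h4⟩, hdec, hub, hvp, hsum⟩
    refine ⟨?_, ?_, ?_, ?_⟩
    · intro i j hij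
      induction j using Fin.cases with
      | zero => exact absurd hij (by simp [Fin.lt_def])
      | succ j' =>
        induction i using Fin.cases with
        | zero =>
          simp only [Fin.cons_zero, Fin.cons_succ]
          have := hub j'
          omega
        | succ i' =>
          simp only [Fin.cons_succ]
          exact hdec i' j' (by exact_mod_cast Fin.succ_lt_succ_iff.mp hij)
    · intro j
      refine Fin.cases ?_ ?_ j
      · simp only [Fin.cons_zero]; exact ⟨h1, h2⟩
      · intro j'
        simp only [Fin.cons_succ]
        have := hub j'
        omega
    · intro j
      refine Fin.cases ?_ ?_ j
      · simp only [Fin.cons_zero]; exact h3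
      · intro j'; simpa using hvp j'
    · rw [Fin.sum_univ_succ]
      simp only [Fin.cons_zero, Fin.cons_succ]
      omega

open Classical in
lemma coeff_TT_eq_BC : ∀ {l : ℕ} (g : Fin l → ℕ → ℚ) (N n : ℕ),
    PowerSeries.coeff n (TT (List.ofFn g) N) = BC g N n := by
  intro l
  induction l with
  | zero =>
    intro g N n
    have h1 : List.ofFn g = [] := by simp
    rw [h1]
    show PowerSeries.coeff n 1 = BC g N n
    have huniq : ∀ (S : Finset ℕ), 0 ∈ S →
        Fintype.piFinset (fun _ : Fin 0 => S) = {fun _ => 0} := by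
      intro S hS
      ext f
      simp only [Fintype.mem_piFinset, mem_singleton]
      constructor
      · intro _; funext j; exact j.elim0
      · intro _ j; exact j.elim0
    rw [BC, huniq _ (by simp), Finset.sum_singleton, huniq _ (by simp), Finset.sum_singleton]
    rw [PowerSeries.coeff_one]
    have : BCcond 0 N n (fun _ => 0) (fun _ => 0) ↔ 0 = n := by
      constructor
      · rintro ⟨-, -, -, h⟩; simpa using h
      · intro h; exact ⟨fun i => i.elim0, fun j => j.elim0, fun j => j.elim0, by simpa using h⟩
    by_cases h : n = 0
    · subst h; rw [if_pos rfl, if_pos (this.2 rfl)]; simp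
    · rw [if_neg h, if_neg (fun hc => h ((this.1 hc).symm))]
  | succ l ih =>
    intro g N n
    rw [List.ofFn_succ, TT_cons, map_sum]
    -- LHS transformation
    have hterm : ∀ u0 ∈ Icc 1 N,
        PowerSeries.coeff n (eF (g 0) u0 * TT (List.ofFn fun i => g i.succ) (u0 - 1))
          = ∑ v0 ∈ range (n + 1), (if 1 ≤ v0 ∧ u0 * v0 ≤ n then
              g 0 (v0 - 1) * BC (fun i => g i.succ) (u0 - 1) (n - u0 * v0) else 0) := by
      intro u0 hu0
      simp only [mem_Icc] at hu0
      rw [PowerSeries.coeff_mul, Nat.sum_antidiagonal_eq_sum_range_succ_mk]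
      set H : ℕ → ℚ := fun i => if 0 < i ∧ u0 ∣ i ∧ i ≤ n then
        g 0 (i / u0 - 1) * BC (fun i => g i.succ) (u0 - 1) (n - i) else 0 with hHdef
      have e0 : ∀ i ∈ range (n+1),
          PowerSeries.coeff i (eF (g 0) u0)
            * PowerSeries.coeff (n - i) (TT (List.ofFn fun i => g i.succ) (u0 - 1)) = H i := by
        intro i hi
        simp only [mem_range] at hi
        rw [eF, PowerSeries.coeff_mk, ih]
        simp only [hHdef]
        by_cases hc : 0 < i ∧ u0 ∣ i
        · rw [if_pos ⟨by omega, hc.1, hc.2⟩, if_pos ⟨hc.1, hc.2, by omega⟩]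
        · rw [if_neg (by tauto), if_neg (by tauto), zero_mul]
      rw [Finset.sum_congr rfl e0]
      rw [sum_multiples (u0 := u0) (n := n) (show 0 < u0 by omega) H (fun i hi => by
        simp only [hHdef] at hi
        by_contra hcon
        exact hi (if_neg (by tauto)))]
      apply Finset.sum_congr rfl
      intro v0 hv0
      simp only [hHdef]
      by_cases hc : 1 ≤ v0 ∧ u0 * v0 ≤ n
      · rw [if_pos ⟨Nat.mul_pos (by omega) (by omega), Dvd.intro v0 rfl, hc.2⟩, if_pos hc,
          Nat.mul_div_cancel_left v0 (show 0 < u0 by omega)]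
      · rw [if_neg, if_neg hc]
        rintro ⟨hp, -, hle⟩
        refine hc ⟨?_, hle⟩
        by_contra hv
        have : v0 = 0 := by omega
        subst this
        simp at hp
    rw [Finset.sum_congr rfl hterm]
    -- RHS transformation
    rw [BC, sum_piFinset_succ]
    have hinner : ∀ u0 ∈ range (N + 1),
        (∑ ut ∈ Fintype.piFinset (fun _ : Fin l => range (N + 1)),
          ∑ v ∈ Fintype.piFinset (fun _ : Fin (l+1) => range (n + 1)),
            if BCcond (l+1) N n (Fin.cons u0 ut) v then ∏ j, g j (v j - 1) else 0)
        = ∑ v0 ∈ range (n + 1), (if 1 ≤ u0 ∧ 1 ≤ v0 ∧ u0 * v0 ≤ n then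
            g 0 (v0 - 1) * BC (fun i => g i.succ) (u0 - 1) (n - u0 * v0) else 0) := by
      intro u0 hu0r
      simp only [mem_range] at hu0r
      have e1 : ∀ ut, ∑ v ∈ Fintype.piFinset (fun _ : Fin (l+1) => range (n + 1)),
          (if BCcond (l+1) N n (Fin.cons u0 ut) v then ∏ j, g j (v j - 1) else 0)
          = ∑ v0 ∈ range (n+1), ∑ vt ∈ Fintype.piFinset (fun _ : Fin l => range (n + 1)),
            (if BCcond (l+1) N n (Fin.cons u0 ut) (Fin.cons v0 vt)
              then ∏ j, g j ((Fin.cons v0 vt : Fin (l+1) → ℕ) j - 1) else 0) := by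
        intro ut
        exact sum_piFinset_succ _ _
      rw [Finset.sum_congr rfl (fun ut _ => e1 ut), Finset.sum_comm]
      apply Finset.sum_congr rfl
      intro v0 hv0
      simp only [mem_range] at hv0
      by_cases hguard : 1 ≤ u0 ∧ 1 ≤ v0 ∧ u0 * v0 ≤ n
      case neg =>
        rw [if_neg hguard]
        apply Finset.sum_eq_zero
        intro ut _
        apply Finset.sum_eq_zero
        intro vt _
        rw [if_neg]
        intro hc
        rw [condCons] at hc
        exact hguard ⟨hc.1.1, hc.1.2.2⟩
      case pos =>
        rw [if_pos hguard]
        have e2 : ∀ ut vt, (if BCcond (l+1) N n (Fin.cons u0 ut) (Fin.cons v0 vt)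
              then ∏ j, g j ((Fin.cons v0 vt : Fin (l+1) → ℕ) j - 1) else 0)
            = g 0 (v0 - 1) * (if BCcond l (u0-1) (n - u0*v0) ut vt
              then ∏ j : Fin l, g j.succ (vt j - 1) else 0) := by
          intro ut vt
          rw [condCons]
          by_cases hc : BCcond l (u0-1) (n - u0*v0) ut vt
          · rw [if_pos ⟨⟨hguard.1, by omega, hguard.2.1, hguard.2.2⟩, hc⟩, if_pos hc,
              Fin.prod_univ_succ]
            simp only [Fin.cons_zero, Fin.cons_succ]
          · rw [if_neg (fun h => hc h.2), if_neg hc, mul_zero]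
        simp only [e2, ← Finset.mul_sum]
        congr 1
        exact BC_resize _ (by omega) (by omega)
    rw [Finset.sum_congr rfl hinner]
    -- match the two sides: range (N+1) with guard vs Icc 1 N
    symm
    rw [show range (N+1) = range (N+1) from rfl]
    rw [← Finset.sum_subset (show Icc 1 N ⊆ range (N+1) by
      intro x hx; simp only [mem_Icc] at hx; simp only [mem_range]; omega)]
    · apply Finset.sum_congr rfl
      intro u0 hu0
      simp only [mem_Icc] at hu0
      apply Finset.sum_congr rfl
      intro v0 _
      by_cases hc : 1 ≤ v0 ∧ u0 * v0 ≤ n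
      · rw [if_pos ⟨by omega, hc.1, hc.2⟩, if_pos hc]
      · rw [if_neg (by tauto), if_neg hc]
    · intro u0 hu0 hu02
      simp only [mem_range] at hu0
      simp only [mem_Icc] at hu02
      apply Finset.sum_eq_zero
      intro v0 _
      rw [if_neg]
      rintro ⟨h1, -, -⟩
      omega

end
end Aux2

open Classical in
/-- The bi-bracket `[s₁,…,s_l; r₁,…,r_l] ∈ ℚ⟦q⟧`. -/
noncomputable def biBracket {l : ℕ} (s r : Fin l → ℕ) : PowerSeries ℚ :=
  PowerSeries.mk fun n =>
    ∑ u : Fin l → Fin (n + 1), ∑ v : Fin l → Fin (n + 1),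
      if (∀ i j : Fin l, i < j → (u j : ℕ) < (u i : ℕ)) ∧ (∀ j, 0 < (u j : ℕ)) ∧
          (∀ j, 0 < (v j : ℕ)) ∧ (∑ j, (u j : ℕ) * (v j : ℕ)) = n
      then ∏ j, (u j : ℚ) ^ (r j) / (Nat.factorial (r j)) *
            ((v j : ℚ) ^ (s j - 1) / (Nat.factorial (s j - 1)))
      else 0

/-- The bracket `[s₁,…,s_l] ∈ ℚ⟦q⟧` (for `l = 0` this is `1`). -/
noncomputable def bracket {l : ℕ} (s : Fin l → ℕ) : PowerSeries ℚ :=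
  biBracket s 0

section Aux3
noncomputable section

lemma fin_to_pi_sum {l n : ℕ} (G : (Fin l → ℕ) → ℚ) :
    ∑ u : Fin l → Fin (n + 1), G (fun j => (u j : ℕ))
      = ∑ u ∈ Fintype.piFinset (fun _ : Fin l => range (n + 1)), G u := by
  refine Finset.sum_nbij' (fun u => fun j => (u j : ℕ))
    (fun u => fun j => (⟨min (u j) n, by omega⟩ : Fin (n + 1))) ?_ ?_ ?_ ?_ ?_
  · intro u _
    simp only [Fintype.mem_piFinset, mem_range]
    intro j
    exact (u j).isLt
  · intro u _
    exact Finset.mem_univ _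
  · intro u _
    funext j
    ext
    simp only
    have := (u j).isLt
    omega
  · intro u hu
    simp only [Fintype.mem_piFinset, mem_range] at hu
    funext j
    simp only
    have := hu j
    omega
  · intro u _
    rfl

open Classical in
lemma coeff_bracket_eq_BC {l : ℕ} (s : Fin l → ℕ) (n : ℕ) :
    PowerSeries.coeff n (bracket s) = BC (fun j => monoW (s j)) n n := by
  rw [bracket, biBracket, PowerSeries.coeff_mk, BC]
  have conv2 : ∀ (G : (Fin l → ℕ) → (Fin l → ℕ) → ℚ),
      (∑ u : Fin l → Fin (n + 1), ∑ v : Fin l → Fin (n + 1),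
        G (fun j => (u j : ℕ)) (fun j => (v j : ℕ)))
      = ∑ u ∈ Fintype.piFinset (fun _ : Fin l => range (n + 1)),
          ∑ v ∈ Fintype.piFinset (fun _ : Fin l => range (n + 1)), G u v := by
    intro G
    have h1 := fin_to_pi_sum (n := n)
      (G := fun u => ∑ v : Fin l → Fin (n + 1), G u (fun j => (v j : ℕ)))
    refine h1.trans ?_
    apply Finset.sum_congr rfl
    intro u _
    exact fin_to_pi_sum (G u)
  have main := conv2 (fun u v =>
    if (∀ i j : Fin l, i < j → u j < u i) ∧ (∀ j, 0 < u j) ∧ (∀ j, 0 < v j) ∧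
        (∑ j, u j * v j) = n
    then ∏ j, ((u j : ℚ)) ^ ((0 : Fin l → ℕ) j) / (Nat.factorial ((0 : Fin l → ℕ) j)) *
          ((v j : ℚ) ^ (s j - 1) / (Nat.factorial (s j - 1)))
    else 0)
  refine main.trans ?_
  apply Finset.sum_congr rfl
  intro u hu
  apply Finset.sum_congr rfl
  intro v hv
  simp only [Fintype.mem_piFinset, mem_range] at hu hv
  by_cases hc : (∀ i j : Fin l, i < j → u j < u i) ∧ (∀ j, 0 < u j) ∧ (∀ j, 0 < v j) ∧
      (∑ j, u j * v j) = n
  · rw [if_pos hc, if_pos ⟨hc.1, fun j => ⟨hc.2.1 j, by have := hu j; omega⟩, hc.2.2.1, hc.2.2.2⟩]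
    apply Finset.prod_congr rfl
    intro j _
    have hvj : 1 ≤ v j := hc.2.2.1 j
    simp only [Pi.zero_apply, pow_zero, Nat.factorial_zero, Nat.cast_one, div_one, one_mul, monoW]
    have : ((v j - 1 : ℕ) : ℚ) + 1 = (v j : ℚ) := by
      push_cast [hvj]
      ring
    rw [this]
  · rw [if_neg hc, if_neg]
    rintro ⟨h1, h2, h3, h4⟩
    exact hc ⟨h1, fun j => (h2 j).1, h3, h4⟩

/-- the bracket is the limit of truncated sums -/
lemma bracket_eq_limB {l : ℕ} (s : Fin l → ℕ) :
    bracket s = limB (List.ofFn fun j => monoW (s j)) := by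
  ext n
  rw [coeff_bracket_eq_BC, limB, PowerSeries.coeff_mk, coeff_TT_eq_BC]

/-- the product of two `limB`s of binomial lists -/
lemma limB_mul (w1 w2 : List ℕ) (h1 : ∀ x ∈ w1, 1 ≤ x) (h2 : ∀ x ∈ w2, 1 ≤ x) :
    ∃ (F : Finset (List ℕ)) (c : List ℕ → ℚ),
      (∀ w ∈ F, (∀ x ∈ w, 1 ≤ x) ∧ w.length ≤ w1.length + w2.length
        ∧ w.sum = w1.sum + w2.sum) ∧
      limB (w1.map binW) * limB (w2.map binW) = ∑ w ∈ F, c w • limB (w.map binW) := by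
  obtain ⟨F, c, hF, hEq⟩ := TT_mul_expand (w1.length + w2.length) w1 w2 le_rfl h1 h2
  refine ⟨F, c, hF, ?_⟩
  ext n
  rw [PowerSeries.coeff_mul]
  have e0 : ∀ p ∈ antidiagonal n,
      PowerSeries.coeff p.1 (limB (w1.map binW)) * PowerSeries.coeff p.2 (limB (w2.map binW))
        = PowerSeries.coeff p.1 (TT (w1.map binW) n)
          * PowerSeries.coeff p.2 (TT (w2.map binW) n) := by
    intro p hp
    rw [Finset.HasAntidiagonal.mem_antidiagonal] at hp
    rw [coeff_limB _ (show p.1 ≤ n by omega), coeff_limB _ (show p.2 ≤ n by omega)]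
  rw [Finset.sum_congr rfl e0, ← PowerSeries.coeff_mul, hEq n, map_sum, map_sum]
  apply Finset.sum_congr rfl
  intro w hw
  rw [PowerSeries.coeff_smul, PowerSeries.coeff_smul, limB, PowerSeries.coeff_mk]

lemma forall₂_map_map {R : (ℕ → ℚ) → Set (ℕ → ℚ) → Prop} (l : List ℕ)
    (f : ℕ → (ℕ → ℚ)) (g : ℕ → Set (ℕ → ℚ)) (h : ∀ a ∈ l, R (f a) (g a)) :
    List.Forall₂ R (l.map f) (l.map g) := by
  induction l with
  | nil => exact List.Forall₂.nil
  | cons a l ih =>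
    exact List.Forall₂.cons (h a (by simp)) (ih (fun a ha => h a (by simp [ha])))

lemma extractGen (B : ℕ → (ℕ → ℚ)) :
    ∀ (sl : List ℕ) (gs' : List (ℕ → ℚ)),
      List.Forall₂ (· ∈ ·) gs' (sl.map (fun a => {g | ∃ c ∈ Icc 1 a, g = B c})) →
      ∃ w : List ℕ, gs' = w.map B ∧ w.length = sl.length ∧ (∀ x ∈ w, 1 ≤ x) ∧ w.sum ≤ sl.sum := by
  intro sl
  induction sl with
  | nil =>
    intro gs' hF
    cases hF
    exact ⟨[], rfl, rfl, by simp, by simp⟩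
  | cons a sl ih =>
    intro gs' hF
    rw [List.map_cons] at hF
    obtain ⟨g, gs'', hg, htl, rfl⟩ : ∃ g gs'', g ∈ {g | ∃ c ∈ Icc 1 a, g = B c} ∧
        List.Forall₂ (· ∈ ·) gs'' (sl.map fun a => {g | ∃ c ∈ Icc 1 a, g = B c}) ∧
        gs' = g :: gs'' := by
      cases hF with
      | cons h1 h2 => exact ⟨_, _, h1, h2, rfl⟩
    obtain ⟨c, hc, rfl⟩ := hg
    obtain ⟨w, rfl, hlen, hmem, hsum⟩ := ih gs'' htl
    simp only [mem_Icc] at hc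
    refine ⟨c :: w, rfl, by simp [hlen], ?_, ?_⟩
    · intro x hx
      rcases List.mem_cons.1 hx with rfl | hx
      · exact hc.1
      · exact hmem x hx
    · simp only [List.sum_cons]
      omega

end
end Aux3

section Aux4

lemma bracket_mem_spanA {l : ℕ} (s : Fin l → ℕ) (hs : ∀ j, 1 ≤ s j) :
    bracket s ∈ Submodule.span ℚ
      {p : PowerSeries ℚ | ∃ w : List ℕ, (∀ x ∈ w, 1 ≤ x) ∧ w.length = l ∧
        w.sum ≤ ∑ j, s j ∧ p = limB (w.map binW)} := by
  rw [bracket_eq_limB]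
  have hofn : (List.ofFn fun j => monoW (s j)) = (List.ofFn s).map monoW := by
    rw [List.map_ofFn]; rfl
  rw [hofn]
  have hF2 : List.Forall₂ (fun g S => g ∈ Submodule.span ℚ S) ((List.ofFn s).map monoW)
      ((List.ofFn s).map (fun a => {g | ∃ c ∈ Icc 1 a, g = binW c})) := by
    apply forall₂_map_map
    intro a ha
    have ha1 : 1 ≤ a := by
      rw [List.mem_ofFn] at ha
      obtain ⟨j, rfl⟩ := ha
      exact hs j
    exact monoW_mem ha1
  have hspan := limB_span _ [] _ hF2
  refine Submodule.span_le.2 ?_ hspan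
  rintro p ⟨gs', hF', rfl⟩
  obtain ⟨w, rfl, hlen, hmem, hsum⟩ := extractGen binW (List.ofFn s) gs' hF'
  apply Submodule.subset_span
  refine ⟨w, hmem, by simpa using hlen, ?_, by simp⟩
  calc w.sum ≤ (List.ofFn s).sum := hsum
    _ = ∑ j, s j := List.sum_ofFn

lemma limB_bin_mem_spanS {L W : ℕ} (w : List ℕ) (hw : ∀ x ∈ w, 1 ≤ x)
    (hlen : w.length ≤ L) (hsum : w.sum ≤ W) :
    limB (w.map binW) ∈ Submodule.span ℚ
      (({1} ∪ {f | ∃ (r : ℕ) (a : Fin r → ℕ), (∀ j, 1 ≤ a j) ∧ r ≤ L ∧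
        (∑ j, a j) ≤ W ∧ f = bracket a}) : Set (PowerSeries ℚ)) := by
  have hF2 : List.Forall₂ (fun g S => g ∈ Submodule.span ℚ S) (w.map binW)
      (w.map (fun c => {g | ∃ j ∈ Icc 1 c, g = monoW j})) :=
    forall₂_map_map _ _ _ (fun c hc => binW_mem (hw c hc))
  have hspan := limB_span _ [] _ hF2
  refine Submodule.span_le.2 ?_ hspan
  rintro p ⟨gs', hF', rfl⟩
  obtain ⟨a, rfl, hlen', hmem', hsum'⟩ := extractGen monoW w gs' hF'
  apply Submodule.subset_span
  refine Set.mem_union_right _ ⟨a.length, fun i => a.get i, ?_, by omega, ?_, ?_⟩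
  · intro j
    exact hmem' _ (a.get_mem j)
  · have e1 : ∑ j : Fin a.length, (fun i => a.get i) j = a.sum := by
      conv_rhs => rw [← List.ofFn_get a]
      rw [List.sum_ofFn]
    omega
  · show limB ([] ++ a.map monoW) = bracket _
    rw [List.nil_append, bracket_eq_limB]
    conv_lhs => rw [← List.ofFn_get a]
    rw [List.map_ofFn]
    rfl

end Aux4

/-- The product of two brackets lies in the ℚ-linear span of `1` and brackets of length
`≤ l₁ + l₂` and weight `≤ (s₁+⋯+s_{l₁}) + (t₁+⋯+t_{l₂})`.  In particular the space spanned by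
`1` and all brackets is a ℚ-subalgebra of `ℚ⟦q⟧`. -/
theorem bracket_mul_mem_span {l1 l2 : ℕ} (s : Fin l1 → ℕ) (t : Fin l2 → ℕ)
    (hs : ∀ j, 1 ≤ s j) (ht : ∀ j, 1 ≤ t j) :
    bracket s * bracket t ∈ Submodule.span ℚ
      (({1} ∪ {f | ∃ (r : ℕ) (a : Fin r → ℕ), (∀ j, 1 ≤ a j) ∧ r ≤ l1 + l2 ∧
        (∑ j, a j) ≤ (∑ j, s j) + (∑ j, t j) ∧ f = bracket a}) : Set (PowerSeries ℚ)) := by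
  set S : Set (PowerSeries ℚ) := ({1} ∪ {f | ∃ (r : ℕ) (a : Fin r → ℕ), (∀ j, 1 ≤ a j) ∧
    r ≤ l1 + l2 ∧ (∑ j, a j) ≤ (∑ j, s j) + (∑ j, t j) ∧ f = bracket a}) with hS
  have key : ∀ (p q : PowerSeries ℚ),
      (∃ w1 : List ℕ, (∀ x ∈ w1, 1 ≤ x) ∧ w1.length = l1 ∧ w1.sum ≤ ∑ j, s j ∧
        p = limB (w1.map binW)) →
      (∃ w2 : List ℕ, (∀ x ∈ w2, 1 ≤ x) ∧ w2.length = l2 ∧ w2.sum ≤ ∑ j, t j ∧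
        q = limB (w2.map binW)) →
      p * q ∈ Submodule.span ℚ S := by
    rintro p q ⟨w1, hw1, hl1, hsum1, rfl⟩ ⟨w2, hw2, hl2, hsum2, rfl⟩
    obtain ⟨F, c, hF, hEq⟩ := limB_mul w1 w2 hw1 hw2
    rw [hEq]
    apply Submodule.sum_mem
    intro w hw
    obtain ⟨hmem, hlen, hsum⟩ := hF w hw
    apply Submodule.smul_mem
    exact limB_bin_mem_spanS w hmem (by omega) (by omega)
  have hbs := bracket_mem_spanA s hs
  have hbt := bracket_mem_spanA t ht
  clear_value S
  have main : ∀ p ∈ Submodule.span ℚ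
      {p : PowerSeries ℚ | ∃ w : List ℕ, (∀ x ∈ w, 1 ≤ x) ∧ w.length = l1 ∧
        w.sum ≤ ∑ j, s j ∧ p = limB (w.map binW)},
      ∀ q ∈ Submodule.span ℚ
      {p : PowerSeries ℚ | ∃ w : List ℕ, (∀ x ∈ w, 1 ≤ x) ∧ w.length = l2 ∧
        w.sum ≤ ∑ j, t j ∧ p = limB (w.map binW)},
      p * q ∈ Submodule.span ℚ S := by
    intro p hp q hq
    induction hp using Submodule.span_induction with
    | mem x hx =>
      induction hq using Submodule.span_induction with
      | mem y hy => exact key x y hx hy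
      | zero => rw [mul_zero]; exact Submodule.zero_mem _
      | add y z _ _ hy hz => rw [mul_add]; exact Submodule.add_mem _ hy hz
      | smul r y _ hy => rw [mul_smul_comm]; exact Submodule.smul_mem _ _ hy
    | zero => rw [zero_mul]; exact Submodule.zero_mem _
    | add x y _ _ hx hy => rw [add_mul]; exact Submodule.add_mem _ hx hy
    | smul r x _ hx => rw [smul_mul_assoc]; exact Submodule.smul_mem _ _ hx
  exact main _ hbs _ hbt
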